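/- arXiv:2211.00181 — 7 statements merged into one kernel-verified Lean document; each statement's English description precedes it below -/
import Mathlib

section
/- Let n be a natural number and E = EuclideanSpace ℝ (Fin n). For every x ∈ E with ‖x‖ < 1, the point φ(x) = ((1 + ‖x‖²)/(1 - ‖x‖²), (2/(1 - ‖x‖²)) • x) satisfies: its zeroth coordinate (1 + ‖x‖²)/(1 - ‖x‖²) ≥ 1, its Minkowski self-product [φ(x), φ(x)] = -1, and ψ(φ(x)) = x. Conversely, for every y = (y₀, yᵣ) ∈ ℝ × E with y₀ > 0 and [y, y] = -1, one has ‖ψ(y)‖ < 1 and φ(ψ(y)) = y. -/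
open RealInnerProductSpace

/-- The Minkowski product on `ℝ × E`. -/
noncomputable def mink {n : ℕ} (y w : ℝ × EuclideanSpace ℝ (Fin n)) : ℝ :=
  -(y.1 * w.1) + ⟪y.2, w.2⟫

/-- The transition map from the Poincaré ball to the Lorentz model. -/
noncomputable def phi {n : ℕ} (x : EuclideanSpace ℝ (Fin n)) : ℝ × EuclideanSpace ℝ (Fin n) :=
  ((1 + ‖x‖ ^ 2) / (1 - ‖x‖ ^ 2), (2 / (1 - ‖x‖ ^ 2)) • x)

/-- The transition map from the Lorentz model to the Poincaré ball. -/
noncomputable def psi {n : ℕ} (y : ℝ × EuclideanSpace ℝ (Fin n)) : EuclideanSpace ℝ (Fin n) :=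
  (1 / (1 + y.1)) • y.2

theorem phi_psi_inverse (n : ℕ) :
    (∀ x : EuclideanSpace ℝ (Fin n), ‖x‖ < 1 →
      1 ≤ (phi x).1 ∧ mink (phi x) (phi x) = -1 ∧ psi (phi x) = x) ∧
    (∀ y : ℝ × EuclideanSpace ℝ (Fin n), 0 < y.1 → mink y y = -1 →
      ‖psi y‖ < 1 ∧ phi (psi y) = y) := by
  constructor
  · intro x hx
    have hs : ‖x‖ ^ 2 < 1 := by nlinarith [norm_nonneg x]
    have hpos : (0:ℝ) < 1 - ‖x‖ ^ 2 := by linarith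
    have hsnn : (0:ℝ) ≤ ‖x‖ ^ 2 := by positivity
    refine ⟨?_, ?_, ?_⟩
    · show (1:ℝ) ≤ (1 + ‖x‖ ^ 2) / (1 - ‖x‖ ^ 2)
      rw [le_div_iff₀ hpos]
      nlinarith
    · simp only [mink, phi, inner_smul_left, inner_smul_right, real_inner_self_eq_norm_sq, conj_trivial]
      field_simp
      ring
    · have h0 : (1:ℝ) + (1 + ‖x‖ ^ 2) / (1 - ‖x‖ ^ 2) = 2 / (1 - ‖x‖ ^ 2) := by
        field_simp; ring
      simp only [psi, phi, h0, smul_smul]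
      have hne : (2:ℝ) / (1 - ‖x‖ ^ 2) ≠ 0 := by positivity
      rw [one_div, inv_mul_cancel₀ hne, one_smul]
  · intro y hy hm
    have hyr : ‖y.2‖ ^ 2 = y.1 ^ 2 - 1 := by
      have := hm
      simp only [mink, real_inner_self_eq_norm_sq] at this
      nlinarith
    have hy1 : (1:ℝ) ≤ y.1 := by nlinarith [sq_nonneg ‖y.2‖]
    have h1p : (0:ℝ) < 1 + y.1 := by linarith
    have hnorm : ‖psi y‖ ^ 2 = (y.1 - 1) / (y.1 + 1) := by
      rw [psi, norm_smul, mul_pow, hyr]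
      rw [Real.norm_eq_abs, abs_of_pos (by positivity)]
      field_simp
      ring
    have hlt : ‖psi y‖ ^ 2 < 1 := by
      rw [hnorm, div_lt_one (by linarith)]; linarith
    have hn : ‖psi y‖ < 1 := by nlinarith [norm_nonneg (psi y)]
    refine ⟨hn, ?_⟩
    have h1s : 1 - ‖psi y‖ ^ 2 = 2 / (y.1 + 1) := by
      rw [hnorm]; field_simp; ring
    have h2s : 1 + ‖psi y‖ ^ 2 = 2 * y.1 / (y.1 + 1) := by
      rw [hnorm]; field_simp; ring
    rw [phi, h1s, h2s]
    have hne : (2:ℝ) / (y.1 + 1) ≠ 0 := by positivity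
    ext1
    · show 2 * y.1 / (y.1 + 1) / (2 / (y.1 + 1)) = y.1
      field_simp
    · show (2 / (2 / (y.1 + 1))) • psi y = y.2
      rw [psi, smul_smul]
      have h : 2 / (2 / (y.1 + 1)) * (1 / (1 + y.1)) = 1 := by
        field_simp; ring
      rw [h, one_smul]
end

section
/- (φ is an isometry between the two distance formulas.) Let E = EuclideanSpace ℝ (Fin n) and let x, x' ∈ E satisfy ‖x‖ < 1 and ‖x'‖ < 1. Then -[φ(x), φ(x')] = 1 + 2*‖x - x'‖² / ((1 - ‖x‖²) * (1 - ‖x'‖²)). (Hence the Lorentz geodesic distance arccosh(-[φ(x), φ(x')]) equals the Poincaré geodesic distance arccosh(1 + 2‖x−x'‖²/((1−‖x‖²)(1−‖x'‖²))).) -/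
open RealInnerProductSpace

theorem phi_isometry (n : ℕ) (x x' : EuclideanSpace ℝ (Fin n))
    (hx : ‖x‖ < 1) (hx' : ‖x'‖ < 1) :
    -mink (phi x) (phi x') =
      1 + 2 * ‖x - x'‖ ^ 2 / ((1 - ‖x‖ ^ 2) * (1 - ‖x'‖ ^ 2)) := by
  have ha : 1 - ‖x‖ ^ 2 ≠ 0 := by nlinarith [norm_nonneg x]
  have hb : 1 - ‖x'‖ ^ 2 ≠ 0 := by nlinarith [norm_nonneg x']
  have hns : ‖x - x'‖ ^ 2 = ‖x‖ ^ 2 - 2 * ⟪x, x'⟫ + ‖x'‖ ^ 2 := by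
    rw [@norm_sub_sq_real]
  simp only [mink, phi, real_inner_smul_left, real_inner_smul_right, hns]
  field_simp
  ring
end

section
/- (The differential of φ is a pointwise linear isometry into the tangent space.) Let E = EuclideanSpace ℝ (Fin n), let y = (y₀, yᵣ) ∈ ℝ × E satisfy y₀ > 0 and [y, y] = -1, and let v ∈ E. Then [y, Dφ_y(v)] = 0 and [Dφ_y(v), Dφ_y(v)] = (1 + y₀)² * ‖v‖². (That is, Dφ_y(v) is Minkowski-orthogonal to y, hence tangent to the Lorentz model at y, and its Lorentz norm equals λ_x‖v‖ = (1+y₀)‖v‖, the Poincaré Riemannian norm of v at the point x with φ(x) = y.) -/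
open RealInnerProductSpace

/-- The differential at `y = φ(x)` of the transition map `φ` from the Poincaré ball to the
Lorentz model, applied to a tangent vector `v`. -/
noncomputable def Dphi {n : ℕ} (y : ℝ × EuclideanSpace ℝ (Fin n))
    (v : EuclideanSpace ℝ (Fin n)) : ℝ × EuclideanSpace ℝ (Fin n) :=
  (⟪y.2, v⟫ * (1 + y.1), (1 + y.1) • v + ⟪y.2, v⟫ • y.2)

theorem Dphi_isometry (n : ℕ) (y : ℝ × EuclideanSpace ℝ (Fin n)) (hy : 0 < y.1)
    (hyy : mink y y = -1) (v : EuclideanSpace ℝ (Fin n)) :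
    mink y (Dphi y v) = 0 ∧
    mink (Dphi y v) (Dphi y v) = (1 + y.1) ^ 2 * ‖v‖ ^ 2 := by
  have h2 : ⟪y.2, y.2⟫ = y.1 ^ 2 - 1 := by
    simp only [mink] at hyy; nlinarith
  constructor
  · simp only [mink, Dphi, inner_add_right, inner_smul_right, real_inner_comm y.2 v]
    linear_combination ⟪y.2, v⟫ * h2
  · simp only [mink, Dphi, inner_add_left, inner_add_right, inner_smul_left,
      inner_smul_right, real_inner_comm y.2 v, real_inner_self_eq_norm_sq, conj_trivial]
    have h3 : ‖y.2‖ ^ 2 = y.1 ^ 2 - 1 := by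
      rw [← real_inner_self_eq_norm_sq]; exact h2
    rw [h3]; ring
end

section
/- (Lemma 1 of the paper, Lorentz part.) Let E = EuclideanSpace ℝ (Fin n), let y = (y₀, yᵣ) ∈ ℝ × E satisfy y₀ > 0 and [y, y] = -1, and let u ∈ E. Define the Lorentz gradient vector w := (⟪yᵣ, u⟫/(1 + y₀), (1/(1 + y₀)) • u + (⟪yᵣ, u⟫/(1 + y₀)²) • yᵣ) ∈ ℝ × E, i.e. w = Dφ_y((1/(1+y₀)²) • u). Then its Euclidean norm satisfies √(w₀² + ‖wᵣ‖²) = √(2*⟪yᵣ, u⟫² + ‖u‖²)/(1 + y₀), and consequently √(w₀² + ‖wᵣ‖²) ≤ (√(2*y₀² - 1)/(1 + y₀)) * ‖u‖ ≤ √2 * ‖u‖. (With u = ∇f(x) the Euclidean gradient at x = ψ(y), w is the Lorentz Riemannian gradient ∇_{𝕃ⁿ} g(y) of g = f∘ψ, so ‖∇_{𝕃ⁿ} g(y)‖ = O(‖∇f(x)‖).) -/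
open RealInnerProductSpace

theorem lorentz_gradient_norm (n : ℕ) (y : ℝ × EuclideanSpace ℝ (Fin n)) (hy : 0 < y.1)
    (hyy : mink y y = -1) (u : EuclideanSpace ℝ (Fin n)) :
    Real.sqrt ((⟪y.2, u⟫ / (1 + y.1)) ^ 2 +
        ‖(1 / (1 + y.1)) • u + (⟪y.2, u⟫ / (1 + y.1) ^ 2) • y.2‖ ^ 2) =
      Real.sqrt (2 * ⟪y.2, u⟫ ^ 2 + ‖u‖ ^ 2) / (1 + y.1) ∧
    Real.sqrt (2 * ⟪y.2, u⟫ ^ 2 + ‖u‖ ^ 2) / (1 + y.1) ≤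
      Real.sqrt (2 * y.1 ^ 2 - 1) / (1 + y.1) * ‖u‖ ∧
    Real.sqrt (2 * y.1 ^ 2 - 1) / (1 + y.1) * ‖u‖ ≤ Real.sqrt 2 * ‖u‖ := by
  have hnorm : ‖y.2‖ ^ 2 = y.1 ^ 2 - 1 := by
    have h := hyy
    rw [mink, real_inner_self_eq_norm_sq] at h
    nlinarith
  have hy1 : 1 ≤ y.1 := by nlinarith [sq_nonneg ‖y.2‖]
  have hs : (0:ℝ) < 1 + y.1 := by linarith
  set a := ⟪y.2, u⟫ with ha
  have hcs : a ^ 2 ≤ ‖u‖ ^ 2 * (y.1 ^ 2 - 1) := by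
    have := abs_real_inner_le_norm y.2 u
    have h2 : a ^ 2 ≤ ‖y.2‖ ^ 2 * ‖u‖ ^ 2 := by
      calc a ^ 2 = |a| ^ 2 := (sq_abs a).symm
        _ ≤ (‖y.2‖ * ‖u‖) ^ 2 := by
            apply pow_le_pow_left₀ (abs_nonneg _) this
        _ = ‖y.2‖ ^ 2 * ‖u‖ ^ 2 := by ring
    nlinarith
  have key : (a / (1 + y.1)) ^ 2 +
      ‖(1 / (1 + y.1)) • u + (a / (1 + y.1) ^ 2) • y.2‖ ^ 2 =
      (2 * a ^ 2 + ‖u‖ ^ 2) / (1 + y.1) ^ 2 := by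
    have hcomm : ⟪u, y.2⟫ = a := by rw [ha]; exact (real_inner_comm u y.2).symm
    rw [norm_add_sq_real, norm_smul, norm_smul, real_inner_smul_left,
      real_inner_smul_right, hcomm]
    rw [Real.norm_eq_abs, Real.norm_eq_abs, mul_pow, mul_pow, sq_abs, sq_abs]
    rw [hnorm]
    field_simp
    ring
  refine ⟨?_, ?_, ?_⟩
  · rw [key, Real.sqrt_div (by positivity), Real.sqrt_sq hs.le]
  · have h1 : Real.sqrt (2 * a ^ 2 + ‖u‖ ^ 2) ≤ Real.sqrt (2 * y.1 ^ 2 - 1) * ‖u‖ := by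
      have : 2 * a ^ 2 + ‖u‖ ^ 2 ≤ (2 * y.1 ^ 2 - 1) * ‖u‖ ^ 2 := by nlinarith
      calc Real.sqrt (2 * a ^ 2 + ‖u‖ ^ 2) ≤ Real.sqrt ((2 * y.1 ^ 2 - 1) * ‖u‖ ^ 2) :=
            Real.sqrt_le_sqrt this
        _ = Real.sqrt (2 * y.1 ^ 2 - 1) * ‖u‖ := by
            rw [Real.sqrt_mul (by nlinarith), Real.sqrt_sq (norm_nonneg u)]
    calc Real.sqrt (2 * a ^ 2 + ‖u‖ ^ 2) / (1 + y.1)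
        ≤ Real.sqrt (2 * y.1 ^ 2 - 1) * ‖u‖ / (1 + y.1) := by
          gcongr
      _ = Real.sqrt (2 * y.1 ^ 2 - 1) / (1 + y.1) * ‖u‖ := by ring
  · have h2 : Real.sqrt (2 * y.1 ^ 2 - 1) ≤ Real.sqrt 2 * (1 + y.1) := by
      calc Real.sqrt (2 * y.1 ^ 2 - 1) ≤ Real.sqrt (2 * (1 + y.1) ^ 2) := by
            apply Real.sqrt_le_sqrt; nlinarith
        _ = Real.sqrt 2 * (1 + y.1) := by
            rw [Real.sqrt_mul (by norm_num), Real.sqrt_sq hs.le]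
    have h3 : Real.sqrt (2 * y.1 ^ 2 - 1) / (1 + y.1) ≤ Real.sqrt 2 := by
      rw [div_le_iff₀ hs]; exact h2
    exact mul_le_mul_of_nonneg_right h3 (norm_nonneg u)
end

section
/- (Theorem 1 of the paper, Poincaré part.) For every δ ∈ (0, 1] and every s ≥ 0, setting a := 1 - δ and b := Real.tanh (s * δ * (2 - δ) / 4), one has |(a + b)/(1 + a*b) - (1 - δ)| ≤ s * δ². (Here (a+b)/(1+ab) is the first coordinate of one step of Riemannian gradient descent exp_x(-η∇_{𝔻ⁿ}f(x)) in the Poincaré ball started at x = (1-δ)·e₁ with radial Euclidean gradient of magnitude E and step size η, where s = ηE; thus the update moves x by only O(ηEδ²).) -/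
lemma my_tanh_le_self {x : ℝ} (hx : 0 ≤ x) : Real.tanh x ≤ x := by
  have key : Real.sinh x ≤ x * Real.cosh x := by
    have hmono : MonotoneOn (fun y : ℝ => y * Real.cosh y - Real.sinh y) (Set.Ici 0) := by
      apply monotoneOn_of_deriv_nonneg (convex_Ici 0)
      · fun_prop
      · intro y hy
        exact ((((hasDerivAt_id y).mul (Real.hasDerivAt_cosh y)).sub
          (Real.hasDerivAt_sinh y)).differentiableAt).differentiableWithinAt
      · intro y hy
        have h : HasDerivAt (fun y : ℝ => y * Real.cosh y - Real.sinh y)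
            (1 * Real.cosh y + y * Real.sinh y - Real.cosh y) y :=
          ((hasDerivAt_id y).mul (Real.hasDerivAt_cosh y)).sub (Real.hasDerivAt_sinh y)
        rw [h.deriv]
        have hy0 : (0:ℝ) ≤ y := le_of_lt (by simpa using hy)
        nlinarith [Real.sinh_nonneg_iff.2 hy0]
    have := hmono Set.self_mem_Ici (Set.mem_Ici.2 hx) hx
    simpa using this
  rw [Real.tanh_eq_sinh_div_cosh, div_le_iff₀ (Real.cosh_pos x)]
  exact key

lemma my_tanh_nonneg {x : ℝ} (hx : 0 ≤ x) : 0 ≤ Real.tanh x := by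
  rw [Real.tanh_eq_sinh_div_cosh]
  exact div_nonneg (Real.sinh_nonneg_iff.2 hx) (Real.cosh_pos x).le

theorem poincare_gd_step (δ s : ℝ) (hδ : δ ∈ Set.Ioc (0 : ℝ) 1) (hs : 0 ≤ s) :
    |((1 - δ) + Real.tanh (s * δ * (2 - δ) / 4)) /
        (1 + (1 - δ) * Real.tanh (s * δ * (2 - δ) / 4)) - (1 - δ)| ≤ s * δ ^ 2 := by
  obtain ⟨hδ0, hδ1⟩ := hδ
  set t := s * δ * (2 - δ) / 4 with ht
  have htn : 0 ≤ t := by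
    have : (0:ℝ) ≤ s * δ * (2 - δ) :=
      mul_nonneg (mul_nonneg hs hδ0.le) (by linarith)
    linarith
  set b := Real.tanh t with hb
  have hb0 : 0 ≤ b := my_tanh_nonneg htn
  have hbt : b ≤ t := my_tanh_le_self htn
  have ha0 : (0:ℝ) ≤ 1 - δ := by linarith
  have hd : (1:ℝ) ≤ 1 + (1 - δ) * b := by nlinarith
  have hd0 : (0:ℝ) < 1 + (1 - δ) * b := by linarith
  have hb4 : b * (δ * (2 - δ)) ≤ s * δ ^ 2 := by
    have h1 : b * (δ * (2 - δ)) ≤ t * (δ * (2 - δ)) :=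
      mul_le_mul_of_nonneg_right hbt (mul_nonneg hδ0.le (by linarith))
    have h2 : t * (δ * (2 - δ)) ≤ s * δ ^ 2 := by
      rw [ht]
      nlinarith [mul_nonneg (mul_nonneg hs (pow_nonneg hδ0.le 3)) (by linarith : (0:ℝ) ≤ 4 - δ)]
    linarith
  have hlo : (1 - δ) ≤ ((1 - δ) + b) / (1 + (1 - δ) * b) := by
    rw [le_div_iff₀ hd0]
    nlinarith
  have hhi : ((1 - δ) + b) / (1 + (1 - δ) * b) ≤ (1 - δ) + s * δ ^ 2 := by
    rw [div_le_iff₀ hd0]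
    nlinarith [mul_nonneg (mul_nonneg hs (sq_nonneg δ)) (mul_nonneg ha0 hb0)]
  rw [abs_of_nonneg (by linarith)]
  linarith
end

section
/- (Theorem 1 of the paper, Lorentz part.) Fix a real s > 0. For δ ∈ (0, 1) define t(δ) := s*δ*(2-δ)/2, A(δ) := (2 - 2δ + δ²)/(δ*(2-δ)), and B(δ) := (2 - 2δ)/(δ*(2-δ)). Then both functions δ ↦ (Real.cosh (t δ) * A δ + Real.sinh (t δ) * B δ) - (1/δ - 1/2 + s) and δ ↦ (Real.cosh (t δ) * B δ + Real.sinh (t δ) * A δ) - (1/δ - 1/2 + s) are O(δ) as δ → 0 from the right (i.e., Asymptotics.IsBigO along the filter nhdsWithin 0 (Set.Ioi 0) of the identity function). (These two expressions are the zeroth and first coordinates of one step of Riemannian gradient descent exp_y(-η∇_{𝕃ⁿ}g(y)) in the Lorentz model started at y = φ((1-δ)·e₁), with s = ηE and E the Euclidean gradient magnitude; hence the Lorentz update equals 10^k - 1/2 + ηE + O(ηE·10^{-k}) in each of the first two coordinates when δ = 10^{-k}.) -/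
open Asymptotics

private lemma main_bound (s δ ε : ℝ) (hs : 0 < s) (hδ : 0 < δ) (hδ1 : δ < 1)
    (hsδ : s * δ ≤ 1) (hε : |ε| ≤ 1) :
    |(Real.exp (s * δ * (2 - δ) / 2) * ((2 - δ) / (2 * δ)) +
      ε * Real.exp (-(s * δ * (2 - δ) / 2)) * (δ / (2 * (2 - δ)))) - (1 / δ - 1 / 2 + s)|
      ≤ (s + s / 4 + s ^ 2 + 1) * δ := by
  have h2δ : (0:ℝ) < 2 - δ := by linarith
  set t := s * δ * (2 - δ) / 2 with ht
  have ht0 : 0 ≤ t := by positivity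
  have ht1 : |t| ≤ 1 := by
    rw [abs_of_nonneg ht0, ht]; nlinarith
  have hr : |Real.exp t - 1 - t| ≤ t ^ 2 := Real.abs_exp_sub_one_sub_id_le ht1
  have hF : Real.exp (-t) ≤ 1 := Real.exp_le_one_iff.mpr (by linarith)
  have hF0 : 0 < Real.exp (-t) := Real.exp_pos _
  have hdecomp : (Real.exp t * ((2 - δ) / (2 * δ)) + ε * Real.exp (-t) * (δ / (2 * (2 - δ)))) -
      (1 / δ - 1 / 2 + s)
      = (Real.exp t - 1 - t) * ((2 - δ) / (2 * δ)) + ε * Real.exp (-t) * (δ / (2 * (2 - δ)))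
        + (- (s * δ) + s * δ ^ 2 / 4) := by
    rw [ht]
    field_simp
    ring
  rw [hdecomp]
  have h1 : |(Real.exp t - 1 - t) * ((2 - δ) / (2 * δ))| ≤ s ^ 2 * δ := by
    rw [abs_mul, abs_of_pos (by positivity : (0:ℝ) < (2 - δ) / (2 * δ))]
    have h2 := hr
    have h3 : t ^ 2 * ((2 - δ) / (2 * δ)) = s ^ 2 * δ * (2 - δ) ^ 3 / 8 := by
      rw [ht]; field_simp; ring
    calc |Real.exp t - 1 - t| * ((2 - δ) / (2 * δ))
        ≤ t ^ 2 * ((2 - δ) / (2 * δ)) := by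
          apply mul_le_mul_of_nonneg_right h2 (by positivity)
      _ = s ^ 2 * δ * (2 - δ) ^ 3 / 8 := h3
      _ ≤ s ^ 2 * δ := by
          have hc : (2 - δ) ^ 3 ≤ 8 := by nlinarith
          have hd : 0 ≤ s ^ 2 * δ := by positivity
          nlinarith [mul_le_mul_of_nonneg_left hc hd]
  have h2 : |ε * Real.exp (-t) * (δ / (2 * (2 - δ)))| ≤ δ / 2 := by
    rw [abs_mul, abs_mul, abs_of_pos hF0,
      abs_of_pos (by positivity : (0:ℝ) < δ / (2 * (2 - δ)))]
    have hq : δ / (2 * (2 - δ)) ≤ δ / 2 := by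
      apply div_le_div_of_nonneg_left (le_of_lt hδ) (by norm_num) (by linarith)
    calc |ε| * Real.exp (-t) * (δ / (2 * (2 - δ)))
        ≤ 1 * 1 * (δ / (2 * (2 - δ))) := by
          apply mul_le_mul (mul_le_mul hε hF (le_of_lt hF0) (by norm_num : (0:ℝ) ≤ 1)) le_rfl
            (by positivity) (by norm_num)
      _ ≤ δ / 2 := by simpa using hq
  have h3 : |(- (s * δ) + s * δ ^ 2 / 4)| ≤ s * δ + s * δ ^ 2 / 4 := by
    calc |(- (s * δ) + s * δ ^ 2 / 4)| ≤ |(- (s * δ))| + |s * δ ^ 2 / 4| := abs_add_le _ _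
      _ = s * δ + s * δ ^ 2 / 4 := by
        rw [abs_neg, abs_of_pos (by positivity), abs_of_pos (by positivity)]
  calc |(Real.exp t - 1 - t) * ((2 - δ) / (2 * δ)) + ε * Real.exp (-t) * (δ / (2 * (2 - δ)))
        + (- (s * δ) + s * δ ^ 2 / 4)|
      ≤ |(Real.exp t - 1 - t) * ((2 - δ) / (2 * δ)) + ε * Real.exp (-t) * (δ / (2 * (2 - δ)))|
        + |(- (s * δ) + s * δ ^ 2 / 4)| := abs_add_le _ _
    _ ≤ |(Real.exp t - 1 - t) * ((2 - δ) / (2 * δ))|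
        + |ε * Real.exp (-t) * (δ / (2 * (2 - δ)))| + |(- (s * δ) + s * δ ^ 2 / 4)| := by
        have := abs_add_le ((Real.exp t - 1 - t) * ((2 - δ) / (2 * δ)))
          (ε * Real.exp (-t) * (δ / (2 * (2 - δ))))
        linarith
    _ ≤ s ^ 2 * δ + δ / 2 + (s * δ + s * δ ^ 2 / 4) := by linarith
    _ ≤ (s + s / 4 + s ^ 2 + 1) * δ := by nlinarith

theorem lorentz_gd_step (s : ℝ) (hs : 0 < s) :
    ((fun δ : ℝ =>
        (Real.cosh (s * δ * (2 - δ) / 2) * ((2 - 2 * δ + δ ^ 2) / (δ * (2 - δ))) +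
          Real.sinh (s * δ * (2 - δ) / 2) * ((2 - 2 * δ) / (δ * (2 - δ)))) -
        (1 / δ - 1 / 2 + s)) =O[nhdsWithin 0 (Set.Ioi 0)] fun δ : ℝ => δ) ∧
    ((fun δ : ℝ =>
        (Real.cosh (s * δ * (2 - δ) / 2) * ((2 - 2 * δ) / (δ * (2 - δ))) +
          Real.sinh (s * δ * (2 - δ) / 2) * ((2 - 2 * δ + δ ^ 2) / (δ * (2 - δ)))) -
        (1 / δ - 1 / 2 + s)) =O[nhdsWithin 0 (Set.Ioi 0)] fun δ : ℝ => δ) := by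
  have hmem : Set.Ioo (0:ℝ) (min 1 (1/s)) ∈ nhdsWithin (0:ℝ) (Set.Ioi 0) := by
    apply Ioo_mem_nhdsGT_of_mem
    exact ⟨le_refl 0, lt_min one_pos (by positivity)⟩
  constructor
  · apply IsBigO.of_bound (s + s / 4 + s ^ 2 + 1)
    filter_upwards [hmem] with δ hδ
    obtain ⟨hδ0, hδm⟩ := hδ
    have hδ1 : δ < 1 := lt_of_lt_of_le hδm (min_le_left _ _)
    have hsδ : s * δ ≤ 1 := by
      have := lt_of_lt_of_le hδm (min_le_right _ _)
      rw [lt_div_iff₀ hs] at this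
      linarith [this]
    have h2δ : (0:ℝ) < 2 - δ := by linarith
    have heq : Real.cosh (s * δ * (2 - δ) / 2) * ((2 - 2 * δ + δ ^ 2) / (δ * (2 - δ))) +
          Real.sinh (s * δ * (2 - δ) / 2) * ((2 - 2 * δ) / (δ * (2 - δ)))
        = Real.exp (s * δ * (2 - δ) / 2) * ((2 - δ) / (2 * δ)) +
          (1:ℝ) * Real.exp (-(s * δ * (2 - δ) / 2)) * (δ / (2 * (2 - δ))) := by
      rw [Real.cosh_eq, Real.sinh_eq]
      field_simp
      ring
    rw [Real.norm_eq_abs, Real.norm_eq_abs, abs_of_pos hδ0, heq]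
    exact main_bound s δ 1 hs hδ0 hδ1 hsδ (by norm_num)
  · apply IsBigO.of_bound (s + s / 4 + s ^ 2 + 1)
    filter_upwards [hmem] with δ hδ
    obtain ⟨hδ0, hδm⟩ := hδ
    have hδ1 : δ < 1 := lt_of_lt_of_le hδm (min_le_left _ _)
    have hsδ : s * δ ≤ 1 := by
      have := lt_of_lt_of_le hδm (min_le_right _ _)
      rw [lt_div_iff₀ hs] at this
      linarith [this]
    have h2δ : (0:ℝ) < 2 - δ := by linarith
    have heq : Real.cosh (s * δ * (2 - δ) / 2) * ((2 - 2 * δ) / (δ * (2 - δ))) +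
          Real.sinh (s * δ * (2 - δ) / 2) * ((2 - 2 * δ + δ ^ 2) / (δ * (2 - δ)))
        = Real.exp (s * δ * (2 - δ) / 2) * ((2 - δ) / (2 * δ)) +
          (-1:ℝ) * Real.exp (-(s * δ * (2 - δ) / 2)) * (δ / (2 * (2 - δ))) := by
      rw [Real.cosh_eq, Real.sinh_eq]
      field_simp
      ring
    rw [Real.norm_eq_abs, Real.norm_eq_abs, abs_of_pos hδ0, heq]
    exact main_bound s δ (-1) hs hδ0 hδ1 hsδ (by norm_num)
end

section
/- (Theorem 2 of the paper: one step of Euclidean-parametrized gradient descent.) For every δ ∈ (0, 1] and every s ≥ 0, one has |(Real.log ((2 - δ)/δ) + (s/2) * δ * (2 - δ)) - (Real.log (2/δ) + (s - 1/2) * δ)| ≤ (1 + s) * δ². (The quantity ln((2−δ)/δ) + (s/2)δ(2−δ) is the first coordinate of the Euclidean gradient update z − η∇h(z) for h = f∘F_D at z = 2·artanh(1−δ)·e₁ with s = η‖∇f(x)‖; thus the update equals ln(10)k + ln 2 + (η‖∇f(x)‖ − 1/2)·10^{-k} + O(10^{-2k}) when δ = 10^{-k}.) -/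
theorem euclidean_gd_step (δ s : ℝ) (hδ : δ ∈ Set.Ioc (0 : ℝ) 1) (hs : 0 ≤ s) :
    |(Real.log ((2 - δ) / δ) + (s / 2) * δ * (2 - δ)) -
        (Real.log (2 / δ) + (s - 1 / 2) * δ)| ≤ (1 + s) * δ ^ 2 := by
  obtain ⟨h1, h2⟩ := hδ
  have hpos : 0 < 1 - δ / 2 := by linarith
  have hup : Real.log (1 - δ / 2) ≤ -(δ / 2) := by
    have := Real.log_le_sub_one_of_pos hpos
    linarith
  have hlow : -(δ / 2) - 2 * (δ / 2) ^ 2 ≤ Real.log (1 - δ / 2) := by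
    have hinv : 0 < (1 - δ / 2)⁻¹ := by positivity
    have h := Real.log_le_sub_one_of_pos hinv
    rw [Real.log_inv] at h
    have hb : (1 - δ / 2)⁻¹ ≤ 1 + δ / 2 + δ ^ 2 / 2 := by
      rw [inv_le_iff_one_le_mul₀ hpos]
      nlinarith
    nlinarith
  have hlog : Real.log ((2 - δ) / δ) - Real.log (2 / δ) = Real.log (1 - δ / 2) := by
    rw [Real.log_div (by linarith) (by linarith), Real.log_div (by norm_num) (by linarith),
      show (1 - δ / 2) = (2 - δ) / 2 by ring, Real.log_div (by linarith) (by norm_num)]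
    ring
  rw [abs_le]
  constructor <;> nlinarith [sq_nonneg δ, mul_nonneg hs (sq_nonneg δ)]
end
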